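/- Assume λ_k < α ≤ β. Then for every v ∈ V₂ there exists a unique u* ∈ V₁ such that J_{α,β}(u* + v) ≥ J_{α,β}(u + v) for every u ∈ V₁; that is, u ↦ J_{α,β}(u+v) achieves a unique maximum on V₁. -/

import Mathlib

open MeasureTheory RealInnerProductSpace Filter Topology

section Aux

variable {A : Type*} [MeasurableSpace A] {μ : Measure A}

lemma pos_neg_orth (f : Lp ℝ 2 μ) : ⟪Lp.posPart f, Lp.negPart f⟫ = 0 := by
  rw [MeasureTheory.L2.inner_def]
  apply integral_eq_zero_of_ae
  filter_upwards [Lp.coeFn_posPart f, Lp.coeFn_negPart_eq_max f] with a h1 h2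
  simp only [h1, h2, RCLike.inner_apply, conj_trivial, Pi.zero_apply]
  rcases le_total (f a) 0 with h | h
  · have h1' : max (f a) 0 = 0 := max_eq_right h
    rw [h1', mul_zero]
  · have h2' : max (-(f a)) 0 = 0 := max_eq_right (by linarith)
    rw [h2', zero_mul]

lemma pos_sub_neg (f : Lp ℝ 2 μ) : Lp.posPart f - Lp.negPart f = f := by
  apply Lp.ext
  filter_upwards [Lp.coeFn_posPart f, Lp.coeFn_negPart_eq_max f,
    Lp.coeFn_sub (Lp.posPart f) (Lp.negPart f)] with a h1 h2 h3
  rw [h3, Pi.sub_apply, h1, h2]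
  rcases le_total (f a) 0 with h | h
  · rw [max_eq_right h, max_eq_left (by linarith)]; ring
  · rw [max_eq_left h, max_eq_right (by linarith)]; ring

lemma norm_sq_split (f : Lp ℝ 2 μ) :
    ‖f‖ ^ 2 = ‖Lp.posPart f‖ ^ 2 + ‖Lp.negPart f‖ ^ 2 := by
  conv_lhs => rw [← pos_sub_neg f]
  rw [norm_sub_sq_real, pos_neg_orth]; ring

lemma negPart_mid (a b : Lp ℝ 2 μ) :
    ‖Lp.negPart ((2:ℝ)⁻¹ • (a + b))‖ ≤ (‖Lp.negPart a‖ + ‖Lp.negPart b‖) / 2 := by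
  have h1 : ‖Lp.negPart ((2:ℝ)⁻¹ • (a + b))‖
      ≤ ‖(2:ℝ)⁻¹ • (Lp.negPart a + Lp.negPart b)‖ := by
    apply Lp.norm_le_norm_of_ae_le
    filter_upwards [Lp.coeFn_negPart_eq_max ((2:ℝ)⁻¹ • (a + b)),
      Lp.coeFn_smul ((2:ℝ)⁻¹) (a + b), Lp.coeFn_add a b,
      Lp.coeFn_smul ((2:ℝ)⁻¹) (Lp.negPart a + Lp.negPart b),
      Lp.coeFn_add (Lp.negPart a) (Lp.negPart b),
      Lp.coeFn_negPart_eq_max a, Lp.coeFn_negPart_eq_max b] with x e1 e2 e3 e4 e5 e6 e7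
    have L : (Lp.negPart ((2:ℝ)⁻¹ • (a + b))) x = max (-((2:ℝ)⁻¹ * (a x + b x))) 0 := by
      rw [e1, e2, Pi.smul_apply, e3, Pi.add_apply, smul_eq_mul]
    have R : ((2:ℝ)⁻¹ • (Lp.negPart a + Lp.negPart b)) x
        = (2:ℝ)⁻¹ * (max (-(a x)) 0 + max (-(b x)) 0) := by
      rw [e4, Pi.smul_apply, e5, Pi.add_apply, e6, e7, smul_eq_mul]
    rw [L, R, Real.norm_eq_abs, Real.norm_eq_abs,
      abs_of_nonneg (le_max_right _ _), abs_of_nonneg (by positivity)]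
    have hA' := le_max_left (-(a x)) (0:ℝ)
    have hB' := le_max_left (-(b x)) (0:ℝ)
    apply max_le _ (by positivity)
    nlinarith
  refine h1.trans ?_
  rw [norm_smul]
  have := norm_add_le (Lp.negPart a) (Lp.negPart b)
  simp only [norm_inv, Real.norm_ofNat]
  linarith

lemma sq_lt_sq_of_lt {a b : ℝ} (ha : 0 ≤ a) (h : a < b) : a ^ 2 < b ^ 2 := by nlinarith

lemma radius_sq {M : ℝ} (hM : 0 ≤ M) : M < (Real.sqrt M + 1) ^ 2 := by
  have hs := Real.sq_sqrt hM
  have := Real.sqrt_nonneg M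
  nlinarith

lemma pos_combo {a lk x y : ℝ} (h : lk < a) (hx : 0 < x) (hb : y ≤ lk * x) :
    0 < a * x - y := by nlinarith

lemma div_mul_le {a lk x y : ℝ} (ha : 0 < a) (hlk : 0 < lk) (hb : y ≤ lk * x) :
    (a / lk) * y ≤ a * x := by
  have h' := mul_le_mul_of_nonneg_left hb (le_of_lt (div_pos ha hlk))
  have he : (a / lk) * (lk * x) = a * x := by field_simp
  linarith

end Aux

/-- The functional `J_{α,β}(u) = ½(B(u,u) - α∫_Ω (u⁺)² - β∫_Ω (u⁻)²)`, where the Hilbert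
space `X₀` carries the Gagliardo-type inner product `B = ⟪·,·⟫` and `T : X₀ → L²(Ω)` is the
embedding into `L²(Ω)`; note `∫_Ω (u⁺)² = ‖(Tu)⁺‖²_{L²}`. -/
noncomputable def Jfun {Ω : Type*} [MeasurableSpace Ω] {μ : Measure Ω}
    {X₀ : Type*} [NormedAddCommGroup X₀] [InnerProductSpace ℝ X₀]
    (T : X₀ →ₗ[ℝ] Lp ℝ 2 μ) (α β : ℝ) (u : X₀) : ℝ :=
  (⟪u, u⟫ - α * ‖Lp.posPart (T u)‖ ^ 2 - β * ‖Lp.negPart (T u)‖ ^ 2) / 2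

section JLemmas

variable {A : Type*} [MeasurableSpace A] {μ : Measure A}
  {X₀ : Type*} [NormedAddCommGroup X₀] [InnerProductSpace ℝ X₀]
  (T : X₀ →ₗ[ℝ] Lp ℝ 2 μ)

lemma Jalt (α β : ℝ) (w : X₀) :
    Jfun T α β w = (‖w‖ ^ 2 - α * ‖T w‖ ^ 2 - (β - α) * ‖Lp.negPart (T w)‖ ^ 2) / 2 := by
  rw [Jfun, real_inner_self_eq_norm_sq, norm_sq_split (T w)]; ring

lemma Jle {α β : ℝ} (hαβ : α ≤ β) (w : X₀) :
    Jfun T α β w ≤ (‖w‖ ^ 2 - α * ‖T w‖ ^ 2) / 2 := by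
  rw [Jalt]
  have h : 0 ≤ (β - α) * ‖Lp.negPart (T w)‖ ^ 2 := mul_nonneg (by linarith) (sq_nonneg _)
  linarith

lemma Jmid {α β : ℝ} (hαβ : α ≤ β) (w₁ w₂ : X₀) :
    (Jfun T α β w₁ + Jfun T α β w₂) / 2 + (α * ‖T w₁ - T w₂‖ ^ 2 - ‖w₁ - w₂‖ ^ 2) / 8
      ≤ Jfun T α β ((2:ℝ)⁻¹ • (w₁ + w₂)) := by
  rw [Jalt, Jalt, Jalt]
  have hTm : T ((2:ℝ)⁻¹ • (w₁ + w₂)) = (2:ℝ)⁻¹ • (T w₁ + T w₂) := by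
    rw [T.map_smul, T.map_add]
  have hp1 : ‖(2:ℝ)⁻¹ • (w₁ + w₂)‖ ^ 2 = (2 * (‖w₁‖ ^ 2 + ‖w₂‖ ^ 2) - ‖w₁ - w₂‖ ^ 2) / 4 := by
    have := parallelogram_law_with_norm ℝ w₁ w₂
    rw [norm_smul]
    simp only [norm_inv, Real.norm_ofNat]
    nlinarith [norm_nonneg (w₁ + w₂)]
  have hp2 : ‖T ((2:ℝ)⁻¹ • (w₁ + w₂))‖ ^ 2
      = (2 * (‖T w₁‖ ^ 2 + ‖T w₂‖ ^ 2) - ‖T w₁ - T w₂‖ ^ 2) / 4 := by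
    have := parallelogram_law_with_norm ℝ (T w₁) (T w₂)
    rw [hTm, norm_smul]
    simp only [norm_inv, Real.norm_ofNat]
    nlinarith [norm_nonneg (T w₁ + T w₂)]
  have hneg : ‖Lp.negPart (T ((2:ℝ)⁻¹ • (w₁ + w₂)))‖ ^ 2
      ≤ (‖Lp.negPart (T w₁)‖ ^ 2 + ‖Lp.negPart (T w₂)‖ ^ 2) / 2 := by
    have h1 : ‖Lp.negPart (T ((2:ℝ)⁻¹ • (w₁ + w₂)))‖
        ≤ (‖Lp.negPart (T w₁)‖ + ‖Lp.negPart (T w₂)‖) / 2 := by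
      rw [hTm]; exact negPart_mid _ _
    have h0 := norm_nonneg (Lp.negPart (T ((2:ℝ)⁻¹ • (w₁ + w₂))))
    nlinarith [norm_nonneg (Lp.negPart (T w₁)), norm_nonneg (Lp.negPart (T w₂)),
      sq_nonneg (‖Lp.negPart (T w₁)‖ - ‖Lp.negPart (T w₂)‖)]
  have hβα : 0 ≤ β - α := by linarith
  rw [hp1, hp2]
  have key := mul_le_mul_of_nonneg_left hneg hβα
  linarith

end JLemmas

set_option maxHeartbeats 1000000 in
theorem stmt_2
    {n : ℕ} {s : ℝ} (hs0 : 0 < s) (hs1 : s < 1) (hns : 2 * s < (n : ℝ))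
    {Ωs : Set (EuclideanSpace ℝ (Fin n))} (hΩb : Bornology.IsBounded Ωs)
    (hΩm : MeasurableSet Ωs)
    {K : EuclideanSpace ℝ (Fin n) → ℝ} (hKpos : ∀ x, x ≠ 0 → 0 < K x)
    (hK1 : Integrable (fun x => min (‖x‖ ^ 2) 1 * K x))
    (hK2 : ∃ lam > 0, ∀ x, x ≠ 0 → lam * ‖x‖ ^ (-((n : ℝ) + 2 * s)) ≤ K x)
    (hK3 : ∀ x, K (-x) = K x)
    {X₀ : Type*} [NormedAddCommGroup X₀] [InnerProductSpace ℝ X₀] [CompleteSpace X₀]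
    (T : X₀ →ₗ[ℝ] Lp ℝ 2 (volume.restrict Ωs)) (hT : Function.Injective T)
    {lk lk1 : ℝ} (hlk0 : 0 < lk) (hlk : lk < lk1)
    (V₁ V₂ : Submodule ℝ X₀) [FiniteDimensional ℝ V₁]
    (hV₂ : ∀ v : X₀, v ∈ V₂ ↔ ∀ u ∈ V₁, ⟪u, v⟫ = 0 ∧ ⟪T u, T v⟫ = 0)
    (hcompl : IsCompl V₁ V₂)
    (hV₁b : ∀ u ∈ V₁, ⟪u, u⟫ ≤ lk * ‖T u‖ ^ 2)
    (hV₂b : ∀ v ∈ V₂, lk1 * ‖T v‖ ^ 2 ≤ ⟪v, v⟫)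
    {α β : ℝ} (hA : lk < α) (hAB : α ≤ β)
    :
    ∀ v : V₂, ∃! u' : V₁, ∀ u : V₁,
      Jfun T α β ((u : X₀) + (v : X₀)) ≤ Jfun T α β ((u' : X₀) + (v : X₀)) := by
  intro v
  have hα0 : (0:ℝ) < α := lt_trans hlk0 hA
  set vX : X₀ := (v : X₀) with hvX
  have horth : ∀ u : V₁, ⟪(u:X₀), vX⟫ = 0 ∧ ⟪T (u:X₀), T vX⟫ = 0 :=
    fun u => (hV₂ vX).mp v.2 (u:X₀) u.2
  set f : V₁ → ℝ := fun u => Jfun T α β ((u:X₀) + vX) with hf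
  -- continuity of f
  have hfc : Continuous f := by
    have hg : Continuous (fun u : V₁ => (u:X₀) + vX) :=
      continuous_subtype_val.add continuous_const
    have hS : Continuous (fun u : V₁ => T ((u:X₀) + vX)) := by
      have : (fun u : V₁ => T ((u:X₀) + vX))
          = fun u : V₁ => (T.comp V₁.subtype) u + T vX := by
        funext u; simp [LinearMap.comp_apply, map_add]
      rw [this]
      exact (LinearMap.continuous_of_finiteDimensional _).add continuous_const
    haveI : Fact ((1:ENNReal) ≤ 2) := ⟨one_le_two⟩
    have : f = fun u : V₁ => (⟪(u:X₀) + vX, (u:X₀) + vX⟫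
        - α * ‖Lp.posPart (T ((u:X₀) + vX))‖ ^ 2
        - β * ‖Lp.negPart (T ((u:X₀) + vX))‖ ^ 2) / 2 := rfl
    rw [this]
    exact (((Continuous.inner hg hg).sub
      (continuous_const.mul (((Lp.continuous_posPart.comp hS).norm).pow 2))).sub
      (continuous_const.mul (((Lp.continuous_negPart.comp hS).norm).pow 2))).div_const 2
  -- coercive upper bound
  set δ : ℝ := (α - lk) / lk with hδdef
  have hδ : 0 < δ := div_pos (by linarith) hlk0
  have hub : ∀ u : V₁, f u ≤ (‖vX‖ ^ 2 - δ * ‖u‖ ^ 2) / 2 := by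
    intro u
    obtain ⟨h1, h2⟩ := horth u
    have hJ := Jle T hAB ((u:X₀) + vX)
    have e1 : ‖(u:X₀) + vX‖ ^ 2 = ‖(u:X₀)‖ ^ 2 + ‖vX‖ ^ 2 := by
      rw [norm_add_sq_real, h1]; ring
    have e2 : ‖T ((u:X₀) + vX)‖ ^ 2 = ‖T (u:X₀)‖ ^ 2 + ‖T vX‖ ^ 2 := by
      rw [map_add, norm_add_sq_real, h2]; ring
    rw [e1, e2] at hJ
    have hb : ‖(u:X₀)‖ ^ 2 ≤ lk * ‖T (u:X₀)‖ ^ 2 := by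
      have := hV₁b (u:X₀) u.2
      rwa [real_inner_self_eq_norm_sq] at this
    have hTu : (α / lk) * ‖(u:X₀)‖ ^ 2 ≤ α * ‖T (u:X₀)‖ ^ 2 :=
      div_mul_le hα0 hlk0 hb
    have hTv : 0 ≤ α * ‖T vX‖ ^ 2 := by positivity
    have hdiv : δ * ‖(u:X₀)‖ ^ 2 = (α / lk) * ‖(u:X₀)‖ ^ 2 - ‖(u:X₀)‖ ^ 2 := by
      rw [hδdef]; field_simp
    have hnu : ‖u‖ = ‖(u:X₀)‖ := rfl
    rw [hnu]
    have hfu : f u = Jfun T α β ((u:X₀) + vX) := rfl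
    rw [hfu]
    linarith
  -- radius
  set M : ℝ := max ((‖vX‖ ^ 2 - 2 * f 0) / δ) 0 with hM
  set R : ℝ := Real.sqrt M + 1 with hR
  have hs0' : 0 ≤ Real.sqrt M := Real.sqrt_nonneg _
  have hR1 : (1:ℝ) ≤ R := by rw [hR]; linarith
  have hout : ∀ u : V₁, R < ‖u‖ → f u < f 0 := by
    intro u hu
    have h2 : M < ‖u‖ ^ 2 :=
      lt_trans (radius_sq (le_max_right _ _)) (sq_lt_sq_of_lt (by linarith) hu)
    have h3 : (‖vX‖ ^ 2 - 2 * f 0) / δ < ‖u‖ ^ 2 :=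
      lt_of_le_of_lt (le_max_left _ _) h2
    have h4 : ‖vX‖ ^ 2 - 2 * f 0 < δ * ‖u‖ ^ 2 := by
      rw [div_lt_iff₀ hδ] at h3; linarith
    have := hub u
    linarith
  -- existence of max on closed ball
  have hcb : IsCompact (Metric.closedBall (0:V₁) R) := isCompact_closedBall 0 R
  have hne : (Metric.closedBall (0:V₁) R).Nonempty :=
    ⟨0, Metric.mem_closedBall_self (by linarith)⟩
  obtain ⟨u', hu'mem, hu'max⟩ := hcb.exists_isMaxOn hne hfc.continuousOn
  have hglobal : ∀ u : V₁, f u ≤ f u' := by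
    intro u
    by_cases hc : ‖u‖ ≤ R
    · exact hu'max (by simpa [Metric.mem_closedBall, dist_zero_right] using hc)
    · have h5 := hout u (lt_of_not_ge hc)
      have h0 : f 0 ≤ f u' := hu'max (Metric.mem_closedBall_self (by linarith))
      linarith
  refine ⟨u', hglobal, ?_⟩
  -- uniqueness
  intro y hy
  by_contra hne'
  have h1 : f u' ≤ f y := hy u'
  have h2 : f y ≤ f u' := hglobal y
  set d : V₁ := y - u' with hd
  have hd0 : (d:X₀) ≠ 0 := by
    intro h
    apply hne'
    have : d = 0 := Subtype.ext h
    rw [hd] at this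
    exact sub_eq_zero.mp this
  have hTd : T (d:X₀) ≠ 0 := fun h => hd0 (hT (by rw [h, map_zero]))
  have hTd2 : 0 < ‖T (d:X₀)‖ ^ 2 := by
    have : 0 < ‖T (d:X₀)‖ := norm_pos_iff.mpr hTd
    positivity
  have hbd : ‖(d:X₀)‖ ^ 2 ≤ lk * ‖T (d:X₀)‖ ^ 2 := by
    have := hV₁b (d:X₀) d.2
    rwa [real_inner_self_eq_norm_sq] at this
  have key := Jmid T hAB ((y:X₀) + vX) ((u':X₀) + vX)
  have hdiff : ((y:X₀) + vX) - ((u':X₀) + vX) = (d:X₀) := by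
    rw [hd]
    push_cast
    abel
  have hTdiff : T ((y:X₀) + vX) - T ((u':X₀) + vX) = T (d:X₀) := by
    rw [← map_sub, hdiff]
  set m : V₁ := (2:ℝ)⁻¹ • (y + u') with hm
  have hmid : (2:ℝ)⁻¹ • (((y:X₀) + vX) + ((u':X₀) + vX)) = (m:X₀) + vX := by
    rw [hm]
    push_cast
    module
  rw [hdiff, hTdiff, hmid] at key
  have hfy : Jfun T α β ((y:X₀) + vX) = f y := rfl
  have hfu' : Jfun T α β ((u':X₀) + vX) = f u' := rfl
  have hfm : Jfun T α β ((m:X₀) + vX) = f m := rfl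
  rw [hfy, hfu', hfm] at key
  have hpos : 0 < α * ‖T (d:X₀)‖ ^ 2 - ‖(d:X₀)‖ ^ 2 := pos_combo hA hTd2 hbd
  have hcon : f u' < f m := by linarith
  have := hglobal m
  linarith
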